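/- arXiv:2409.03740 — 3 statements merged into one kernel-verified Lean document; each statement's English description precedes it below -/
import Mathlib

section
/- For every μ > 0, lim_{β→∞} β · ∫₀^∞ μ e^{−μ s} · e^{−β s} / (1 + e^{−β s})² ds = μ/2. That is, for S ~ Exp(μ), the expectation E[ e^{−βS}/(1+e^{−βS})² ] is asymptotic to μ/(2β) as β → ∞. -/
open MeasureTheory Real Filter Set

private noncomputable def gfun (t : ℝ) : ℝ := Real.exp (-t) / (1 + Real.exp (-t)) ^ 2

private lemma gfun_cont : Continuous gfun := by
  apply Continuous.div
  · exact (continuous_neg.rexp)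
  · continuity
  · intro t
    have h1 : 0 < 1 + Real.exp (-t) := by positivity
    positivity

private lemma gfun_nonneg (t : ℝ) : 0 ≤ gfun t := by
  unfold gfun
  have h1 : 0 < 1 + Real.exp (-t) := by positivity
  positivity

private lemma gfun_le (t : ℝ) (ht : 0 ≤ t) : gfun t ≤ Real.exp (-t) := by
  unfold gfun
  have h1 : (1:ℝ) ≤ (1 + Real.exp (-t)) ^ 2 := by nlinarith [Real.exp_pos (-t)]
  calc Real.exp (-t) / (1 + Real.exp (-t)) ^ 2 ≤ Real.exp (-t) / 1 := by
        apply div_le_div_of_nonneg_left (Real.exp_nonneg _) one_pos h1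
    _ = Real.exp (-t) := by ring

private lemma exp_neg_int : IntegrableOn (fun t => Real.exp (-t)) (Ioi (0:ℝ)) := by
  simpa using exp_neg_integrableOn_Ioi 0 one_pos

private lemma gfun_integrable : IntegrableOn gfun (Ioi (0:ℝ)) := by
  refine Integrable.mono exp_neg_int gfun_cont.aestronglyMeasurable.restrict ?_
  filter_upwards [ae_restrict_mem measurableSet_Ioi] with t ht
  rw [Real.norm_eq_abs, Real.norm_eq_abs, abs_of_nonneg (gfun_nonneg t),
    abs_of_nonneg (Real.exp_nonneg _)]
  exact gfun_le t (le_of_lt ht)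

private lemma gfun_integral : ∫ t in Ioi (0:ℝ), gfun t = 1 / 2 := by
  have key : ∫ t in Ioi (0:ℝ), gfun t = 1 - (fun t => (1 + Real.exp (-t))⁻¹) 0 := by
    apply integral_Ioi_of_hasDerivAt_of_tendsto'
      (f := fun t => (1 + Real.exp (-t))⁻¹) (f' := gfun)
    · intro x _
      have h1 : (1 + Real.exp (-x)) ≠ 0 := by positivity
      have h2 : HasDerivAt (fun t : ℝ => 1 + Real.exp (-t)) (-Real.exp (-x)) x := by
        simpa using (((hasDerivAt_id x).neg).exp.const_add 1)
      have := h2.inv h1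
      refine this.congr_deriv ?_
      unfold gfun
      field_simp
    · exact gfun_integrable
    · have h1 : Tendsto (fun t : ℝ => 1 + Real.exp (-t)) atTop (nhds 1) := by
        simpa using (Real.tendsto_exp_neg_atTop_nhds_zero.const_add 1)
      simpa using h1.inv₀ one_ne_zero
  rw [key]
  norm_num

/-- for `S ~ Exp(μ)`, `E[e^{−βS}/(1+e^{−βS})²] ~ μ/(2β)` as `β → ∞`. -/
theorem softmin_factor_first_moment (mu : ℝ) (hmu : 0 < mu) :
    Tendsto
      (fun β : ℝ =>
        β * ∫ s in Ioi (0 : ℝ),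
          mu * Real.exp (-(mu * s)) *
            (Real.exp (-(β * s)) / (1 + Real.exp (-(β * s))) ^ 2))
      atTop (nhds (mu / 2)) := by
  set F : ℝ → ℝ := fun β => ∫ t in Ioi (0:ℝ), mu * Real.exp (-(mu * (t / β))) * gfun t with hF
  have hmain : Tendsto F atTop (nhds (mu / 2)) := by
    have hlim : (∫ t in Ioi (0:ℝ), mu * gfun t) = mu / 2 := by
      rw [integral_const_mul, gfun_integral]; ring
    rw [← hlim]
    apply tendsto_integral_filter_of_dominated_convergence (fun t => mu * Real.exp (-t))
    · filter_upwards with β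
      have hc : Continuous fun t : ℝ => mu * Real.exp (-(mu * (t / β))) * gfun t := by
        apply Continuous.mul _ gfun_cont
        apply continuous_const.mul
        apply Real.continuous_exp.comp
        continuity
      exact hc.aestronglyMeasurable.restrict
    · filter_upwards [eventually_ge_atTop (1:ℝ)] with β hβ
      filter_upwards [ae_restrict_mem measurableSet_Ioi] with t ht
      have h1 : Real.exp (-(mu * (t / β))) ≤ 1 := by
        rw [Real.exp_le_one_iff]
        have : 0 ≤ t / β := div_nonneg (le_of_lt ht) (by linarith)
        nlinarith
      rw [Real.norm_eq_abs, abs_of_nonneg (mul_nonneg (by positivity) (gfun_nonneg t))]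
      calc mu * Real.exp (-(mu * (t / β))) * gfun t ≤ mu * 1 * gfun t := by
            apply mul_le_mul_of_nonneg_right _ (gfun_nonneg t)
            exact mul_le_mul_of_nonneg_left h1 hmu.le
        _ ≤ mu * Real.exp (-t) := by
            rw [mul_one]
            exact mul_le_mul_of_nonneg_left (gfun_le t ht.le) hmu.le
    · exact exp_neg_int.const_mul mu
    · filter_upwards with t
      have h1 : Tendsto (fun β : ℝ => mu * (t / β)) atTop (nhds 0) := by
        have h0 : Tendsto (fun β : ℝ => t / β) atTop (nhds 0) :=
          Tendsto.div_atTop tendsto_const_nhds tendsto_id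
        simpa using h0.const_mul mu
      have h1' : Tendsto (fun β : ℝ => -(mu * (t / β))) atTop (nhds 0) := by
        simpa using h1.neg
      have h2 : Tendsto (fun β : ℝ => Real.exp (-(mu * (t / β)))) atTop (nhds 1) := by
        simpa [Function.comp_def] using (Real.continuous_exp.tendsto 0).comp h1'
      have := (h2.const_mul mu).mul_const (gfun t)
      simpa using this
  apply hmain.congr'
  filter_upwards [eventually_gt_atTop (0:ℝ)] with β hβ
  have hsub := integral_comp_mul_left_Ioi
    (fun t => mu * Real.exp (-(mu * (t / β))) * gfun t) 0 hβ
  simp only [mul_zero] at hsub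
  have heq : ∀ s : ℝ, mu * Real.exp (-(mu * (β * s / β))) * gfun (β * s)
      = mu * Real.exp (-(mu * s)) *
          (Real.exp (-(β * s)) / (1 + Real.exp (-(β * s))) ^ 2) := by
    intro s
    rw [mul_div_cancel_left₀ _ (ne_of_gt hβ)]
    rfl
  have hcongr : (∫ x in Ioi (0:ℝ), mu * Real.exp (-(mu * (β * x / β))) * gfun (β * x))
      = ∫ s in Ioi (0:ℝ), mu * Real.exp (-(mu * s)) *
          (Real.exp (-(β * s)) / (1 + Real.exp (-(β * s))) ^ 2) :=
    setIntegral_congr_fun measurableSet_Ioi (fun s _ => heq s)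
  rw [hsub] at hcongr
  rw [hF]
  simp only
  rw [← hcongr, smul_eq_mul, ← mul_assoc, mul_inv_cancel₀ (ne_of_gt hβ), one_mul]
end

section
/- For every μ > 0, lim_{β→∞} β² · ∫₀^∞ μ e^{−μ s} · s · e^{−β s} / (1 + e^{−β s})² ds = μ · log 2. That is, for S ~ Exp(μ), the expectation E[ S · e^{−βS}/(1+e^{−βS})² ] is asymptotic to (μ log 2)/β² as β → ∞. -/
open MeasureTheory Real Filter Set

noncomputable def gFun (u : ℝ) : ℝ := u * Real.exp (-u) / (1 + Real.exp (-u)) ^ 2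

lemma one_add_exp_pos (u : ℝ) : (0:ℝ) < 1 + Real.exp (-u) := by positivity

lemma gFun_cont : Continuous gFun := by
  apply Continuous.div
  · continuity
  · continuity
  · intro u; positivity

lemma gFun_nonneg {u : ℝ} (hu : 0 ≤ u) : 0 ≤ gFun u := by
  unfold gFun; positivity

lemma gFun_le {u : ℝ} (hu : 0 < u) : gFun u ≤ Real.exp (-u) * u ^ ((2:ℝ) - 1) := by
  rw [show ((2:ℝ)-1) = 1 by norm_num, Real.rpow_one]
  unfold gFun
  rw [div_le_iff₀ (by positivity)]
  have h1 : (1:ℝ) ≤ (1 + Real.exp (-u)) ^ 2 := by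
    nlinarith [Real.exp_pos (-u)]
  nlinarith [mul_nonneg (mul_nonneg (Real.exp_pos (-u)).le hu.le) (sub_nonneg.mpr h1)]

lemma gFun_integrable : IntegrableOn gFun (Ioi (0:ℝ)) := by
  refine Integrable.mono (Real.GammaIntegral_convergent (by norm_num : (0:ℝ) < 2))
    gFun_cont.aestronglyMeasurable.restrict ?_
  filter_upwards [ae_restrict_mem measurableSet_Ioi] with u hu
  rw [Real.norm_eq_abs, Real.norm_eq_abs, abs_of_nonneg (gFun_nonneg hu.le),
    abs_of_nonneg (mul_nonneg (Real.exp_pos _).le (Real.rpow_nonneg hu.le _))]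
  exact gFun_le hu

lemma gFun_hasDeriv (u : ℝ) :
    HasDerivAt (fun u => u * (1 / (1 + Real.exp (-u)) - 1) - Real.log (1 + Real.exp (-u)))
      (gFun u) u := by
  have hne : (1 + Real.exp (-u)) ≠ 0 := (one_add_exp_pos u).ne'
  have he : HasDerivAt (fun u : ℝ => 1 + Real.exp (-u)) (-Real.exp (-u)) u := by
    simpa using ((hasDerivAt_neg u).exp).const_add 1
  have h1 : HasDerivAt (fun u : ℝ => 1 / (1 + Real.exp (-u)) - 1)
      (Real.exp (-u) / (1 + Real.exp (-u)) ^ 2) u := by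
    have := (he.inv hne).sub_const 1
    simpa [one_div, neg_neg, neg_div] using this
  have h2 := (hasDerivAt_id u).mul h1
  have h3 := he.log hne
  have := h2.sub h3
  refine this.congr_deriv ?_
  unfold gFun
  field_simp
  simp only [id_eq]
  ring

lemma gFun_integral : ∫ u in Ioi (0:ℝ), gFun u = Real.log 2 := by
  have key := integral_Ioi_of_hasDerivAt_of_tendsto
    (f := fun u => u * (1 / (1 + Real.exp (-u)) - 1) - Real.log (1 + Real.exp (-u)))
    (f' := gFun) (a := 0) (m := 0)
    ((gFun_hasDeriv 0).continuousAt.continuousWithinAt)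
    (fun x _ => gFun_hasDeriv x) gFun_integrable ?_
  · rw [key]; norm_num
  · have hA : Tendsto (fun u : ℝ => u * (1 / (1 + Real.exp (-u)) - 1)) atTop (nhds 0) := by
      have h1 : Tendsto (fun u : ℝ => u * Real.exp (-u)) atTop (nhds 0) := by
        simpa using Real.tendsto_pow_mul_exp_neg_atTop_nhds_zero 1
      have h2 : Tendsto (fun u : ℝ => -(1 / (1 + Real.exp (-u)))) atTop (nhds (-(1/(1+0)))) := by
        refine Tendsto.neg ?_
        refine Tendsto.div tendsto_const_nhds ?_ (by norm_num)
        exact (Real.tendsto_exp_atBot.comp tendsto_neg_atTop_atBot).const_add 1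
      have := h1.mul h2
      simp only [mul_zero, zero_mul] at this
      refine this.congr fun u => ?_
      have hne : (1 + Real.exp (-u)) ≠ 0 := (one_add_exp_pos u).ne'
      field_simp
      ring
    have hB : Tendsto (fun u : ℝ => Real.log (1 + Real.exp (-u))) atTop (nhds 0) := by
      have h0 : Tendsto (fun u : ℝ => 1 + Real.exp (-u)) atTop (nhds 1) := by
        simpa using (Real.tendsto_exp_atBot.comp tendsto_neg_atTop_atBot).const_add 1
      have := (Real.continuousAt_log (by norm_num : (1:ℝ) ≠ 0)).tendsto.comp h0
      simpa [Function.comp_def] using this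
    simpa using hA.sub hB

lemma I_tendsto (mu : ℝ) (hmu : 0 < mu) :
    Tendsto (fun β : ℝ => ∫ u in Ioi (0:ℝ), mu * Real.exp (-(mu * u / β)) * gFun u)
      atTop (nhds (mu * Real.log 2)) := by
  have hmain : Tendsto (fun β : ℝ => ∫ u in Ioi (0:ℝ), mu * Real.exp (-(mu * u / β)) * gFun u)
      atTop (nhds (∫ u in Ioi (0:ℝ), mu * gFun u)) := by
    apply tendsto_integral_filter_of_dominated_convergence (bound := fun u => mu * gFun u)
    · filter_upwards with β
      exact (((continuous_const.mul ((continuous_const.mul continuous_id).div_const β).neg.rexp).mul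
        gFun_cont)).aestronglyMeasurable.restrict
    · filter_upwards [eventually_ge_atTop (1:ℝ)] with β hβ
      rw [ae_restrict_iff' measurableSet_Ioi]
      filter_upwards with u hu
      have hupos : (0:ℝ) < u := hu
      have hg := gFun_nonneg hupos.le
      have hx : 0 ≤ mu * u / β := by positivity
      have hexp : Real.exp (-(mu * u / β)) ≤ 1 := Real.exp_le_one_iff.mpr (by linarith)
      rw [Real.norm_eq_abs, abs_of_nonneg (by positivity)]
      have : mu * Real.exp (-(mu * u / β)) ≤ mu * 1 := by
        exact mul_le_mul_of_nonneg_left hexp hmu.le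
      nlinarith [Real.exp_pos (-(mu * u / β))]
    · exact gFun_integrable.const_mul mu
    · rw [ae_restrict_iff' measurableSet_Ioi]
      filter_upwards with u hu
      have h0 : Tendsto (fun β : ℝ => mu * u / β) atTop (nhds 0) := by
        simpa [div_eq_mul_inv] using tendsto_inv_atTop_zero.const_mul (mu * u)
      have h0' : Tendsto (fun β : ℝ => -(mu * u / β)) atTop (nhds 0) := by
        simpa using h0.neg
      have h1 : Tendsto (fun β : ℝ => Real.exp (-(mu * u / β))) atTop (nhds 1) := by
        have := (Real.continuous_exp.tendsto 0).comp h0'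
        simpa [Function.comp_def] using this
      have := ((h1.const_mul mu).mul_const (gFun u))
      simpa using this
  rw [integral_const_mul, gFun_integral] at hmain
  exact hmain

/-- for `S ~ Exp(μ)`, `E[S·e^{−βS}/(1+e^{−βS})²] ~ (μ log 2)/β²`
as `β → ∞`. -/
theorem softmin_factor_weighted_moment (mu : ℝ) (hmu : 0 < mu) :
    Tendsto
      (fun β : ℝ =>
        β ^ 2 * ∫ s in Ioi (0 : ℝ),
          mu * Real.exp (-(mu * s)) *
            (s * Real.exp (-(β * s)) / (1 + Real.exp (-(β * s))) ^ 2))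
      atTop (nhds (mu * Real.log 2)) := by
  refine Tendsto.congr' ?_ (I_tendsto mu hmu)
  filter_upwards [eventually_gt_atTop (0:ℝ)] with β hβ
  have hβ' : (β:ℝ) ≠ 0 := hβ.ne'
  have hcv := integral_comp_mul_left_Ioi
    (fun u => β⁻¹ * (mu * Real.exp (-(mu * u / β)) * gFun u)) 0 hβ
  simp only [mul_zero, smul_eq_mul] at hcv
  have heq : EqOn
      (fun s => mu * Real.exp (-(mu * s)) *
        (s * Real.exp (-(β * s)) / (1 + Real.exp (-(β * s))) ^ 2))
      (fun s => β⁻¹ * (mu * Real.exp (-(mu * (β * s) / β)) * gFun (β * s))) (Ioi 0) := by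
    intro s hs
    have harg : mu * (β * s) / β = mu * s := by field_simp
    simp only [harg]
    unfold gFun
    have hden : (1 + Real.exp (-(β * s))) ≠ 0 := (one_add_exp_pos _).ne'
    field_simp
  rw [show (∫ s in Ioi (0:ℝ), mu * Real.exp (-(mu * s)) *
        (s * Real.exp (-(β * s)) / (1 + Real.exp (-(β * s))) ^ 2))
      = ∫ s in Ioi (0:ℝ), β⁻¹ * (mu * Real.exp (-(mu * (β * s) / β)) * gFun (β * s))
    from setIntegral_congr_fun measurableSet_Ioi heq]
  rw [hcv, integral_const_mul]
  field_simp
end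

section
/- For every μ > 0, lim_{β→∞} β · ∫₀^∞ μ e^{−μ s} · e^{−2β s} / (1 + e^{−β s})⁴ ds = μ/12. That is, for S ~ Exp(μ), the expectation E[ e^{−2βS}/(1+e^{−βS})⁴ ] is asymptotic to μ/(12β) as β → ∞. -/
open MeasureTheory Real Filter Set

noncomputable def fker (u : ℝ) : ℝ := Real.exp (-(2 * u)) / (1 + Real.exp (-u)) ^ 4

lemma fker_cont : Continuous fker := by
  apply Continuous.div (by continuity) (by continuity)
  intro u
  positivity

lemma fker_nonneg (u : ℝ) : 0 ≤ fker u := by unfold fker; positivity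

lemma fker_le (u : ℝ) : fker u ≤ Real.exp (-(2 * u)) := by
  unfold fker
  rw [div_le_iff₀ (by positivity)]
  have h1 : (1 : ℝ) ≤ (1 + Real.exp (-u)) ^ 4 := by
    calc (1 : ℝ) = 1 ^ 4 := by norm_num
    _ ≤ (1 + Real.exp (-u)) ^ 4 :=
      pow_le_pow_left₀ (by norm_num) (by nlinarith [Real.exp_pos (-u)]) 4
  nlinarith [Real.exp_pos (-(2 * u))]

lemma fker_integrable : IntegrableOn fker (Ioi (0 : ℝ)) := by
  have h := exp_neg_integrableOn_Ioi 0 (by norm_num : (0:ℝ) < 2)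
  refine MeasureTheory.Integrable.mono h fker_cont.aestronglyMeasurable.restrict ?_
  refine ae_of_all _ fun u => ?_
  rw [Real.norm_eq_abs, Real.norm_eq_abs, abs_of_nonneg (fker_nonneg u),
    abs_of_nonneg (Real.exp_pos _).le]
  simpa [neg_mul] using fker_le u

noncomputable def Gker (u : ℝ) : ℝ :=
  ((1 + Real.exp (-u)) ^ 2)⁻¹ / 2 - ((1 + Real.exp (-u)) ^ 3)⁻¹ / 3

lemma Gker_deriv (u : ℝ) : HasDerivAt Gker (fker u) u := by
  have hv : HasDerivAt (fun u : ℝ => 1 + Real.exp (-u)) (Real.exp (-u) * (-1)) u :=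
    ((Real.hasDerivAt_exp (-u)).comp u (hasDerivAt_neg u)).const_add 1
  have hne : (1 + Real.exp (-u)) ≠ 0 := by positivity
  have h2 : HasDerivAt (fun u : ℝ => ((1 + Real.exp (-u)) ^ 2)⁻¹)
      (-((2 : ℕ) * (1 + Real.exp (-u)) ^ 1 * (Real.exp (-u) * (-1))) /
        ((1 + Real.exp (-u)) ^ 2) ^ 2) u :=
    (hv.pow 2).inv (pow_ne_zero _ hne)
  have h3 : HasDerivAt (fun u : ℝ => ((1 + Real.exp (-u)) ^ 3)⁻¹)
      (-((3 : ℕ) * (1 + Real.exp (-u)) ^ 2 * (Real.exp (-u) * (-1))) /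
        ((1 + Real.exp (-u)) ^ 3) ^ 2) u :=
    (hv.pow 3).inv (pow_ne_zero _ hne)
  have h := (h2.div_const 2).sub (h3.div_const 3)
  apply HasDerivAt.congr_deriv h
  symm
  have hexp2 : Real.exp (-(2 * u)) = Real.exp (-u) * Real.exp (-u) := by
    rw [← Real.exp_add]; ring_nf
  unfold fker
  rw [hexp2]
  field_simp
  ring

lemma Gker_tendsto : Tendsto Gker atTop (nhds (1 / 6)) := by
  have hexp : Tendsto (fun u : ℝ => Real.exp (-u)) atTop (nhds 0) :=
    Real.tendsto_exp_atBot.comp tendsto_neg_atTop_atBot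
  have hcont : ContinuousAt (fun t : ℝ => ((1 + t) ^ 2)⁻¹ / 2 - ((1 + t) ^ 3)⁻¹ / 3) 0 := by
    apply ContinuousAt.sub
    · exact (((continuous_const.add continuous_id).pow 2).continuousAt.inv₀ (by norm_num)).div_const _
    · exact (((continuous_const.add continuous_id).pow 3).continuousAt.inv₀ (by norm_num)).div_const _
  have := (hcont.tendsto.comp hexp)
  simp only [Function.comp_def] at this
  convert this using 2 <;> norm_num
  rfl

lemma fker_integral : ∫ u in Ioi (0 : ℝ), fker u = 1 / 12 := by
  have h := integral_Ioi_of_hasDerivAt_of_tendsto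
    ((Gker_deriv 0).continuousAt.continuousWithinAt)
    (fun x _ => Gker_deriv x) fker_integrable Gker_tendsto
  rw [h]
  unfold Gker
  norm_num [Real.exp_zero]

/-- for `S ~ Exp(μ)`, `E[e^{−2βS}/(1+e^{−βS})⁴] ~ μ/(12β)`
as `β → ∞`. -/
theorem softmin_factor_squared_moment (mu : ℝ) (hmu : 0 < mu) :
    Tendsto
      (fun β : ℝ =>
        β * ∫ s in Ioi (0 : ℝ),
          mu * Real.exp (-(mu * s)) *
            (Real.exp (-(2 * β * s)) / (1 + Real.exp (-(β * s))) ^ 4))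
      atTop (nhds (mu / 12)) := by
  have key : (fun β : ℝ =>
        β * ∫ s in Ioi (0 : ℝ),
          mu * Real.exp (-(mu * s)) *
            (Real.exp (-(2 * β * s)) / (1 + Real.exp (-(β * s))) ^ 4))
      =ᶠ[atTop] fun β : ℝ =>
        ∫ u in Ioi (0 : ℝ), mu * Real.exp (-(mu * (u / β))) * fker u := by
    filter_upwards [eventually_gt_atTop 0] with β hβ
    have hsub := integral_comp_mul_left_Ioi
      (fun u => mu * Real.exp (-(mu * (u / β))) * fker u) 0 hβ
    have heq : ∀ s : ℝ,
        mu * Real.exp (-(mu * (β * s / β))) * fker (β * s)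
          = mu * Real.exp (-(mu * s)) *
            (Real.exp (-(2 * β * s)) / (1 + Real.exp (-(β * s))) ^ 4) := by
      intro s
      have : β * s / β = s := by field_simp
      rw [this]
      unfold fker
      ring_nf
    simp only [heq, mul_zero] at hsub
    rw [hsub, smul_eq_mul, ← mul_assoc, mul_inv_cancel₀ hβ.ne', one_mul]
  rw [tendsto_congr' key]
  have hlim : Tendsto (fun β : ℝ => ∫ u in Ioi (0 : ℝ),
      mu * Real.exp (-(mu * (u / β))) * fker u) atTop
      (nhds (∫ u in Ioi (0 : ℝ), mu * fker u)) := by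
    apply tendsto_integral_filter_of_dominated_convergence
      (fun u => mu * Real.exp (-(2 * u)))
    · filter_upwards with β
      apply Continuous.aestronglyMeasurable
      exact (continuous_const.mul
        (Real.continuous_exp.comp (continuous_const.mul (continuous_id.div_const β)).neg)).mul
        fker_cont
    · filter_upwards [eventually_gt_atTop 0] with β hβ
      rw [ae_restrict_iff' measurableSet_Ioi]
      refine ae_of_all _ fun u hu => ?_
      have hu' : (0 : ℝ) < u := hu
      have h1 : Real.exp (-(mu * (u / β))) ≤ 1 := by
        apply Real.exp_le_one_iff.mpr
        have : 0 ≤ mu * (u / β) := by positivity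
        linarith
      have h0 : 0 ≤ Real.exp (-(mu * (u / β))) := (Real.exp_pos _).le
      rw [Real.norm_eq_abs, abs_of_nonneg (mul_nonneg (mul_nonneg hmu.le (Real.exp_pos _).le) (fker_nonneg u))]
      calc mu * Real.exp (-(mu * (u / β))) * fker u
          ≤ mu * 1 * fker u := by
            apply mul_le_mul_of_nonneg_right _ (fker_nonneg u)
            exact mul_le_mul_of_nonneg_left h1 hmu.le
        _ = mu * fker u := by ring
        _ ≤ mu * Real.exp (-(2 * u)) :=
            mul_le_mul_of_nonneg_left (fker_le u) hmu.le
    · have h := exp_neg_integrableOn_Ioi 0 (by norm_num : (0:ℝ) < 2)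
      have := h.const_mul mu
      simpa [neg_mul] using this
    · refine ae_of_all _ fun u => ?_
      have h1 : Tendsto (fun β : ℝ => mu * (u / β)) atTop (nhds 0) := by
        have := tendsto_inv_atTop_zero (𝕜 := ℝ)
        have h2 : Tendsto (fun β : ℝ => u / β) atTop (nhds 0) := by
          simpa [div_eq_mul_inv] using this.const_mul u
        simpa using h2.const_mul mu
      have h2 : Tendsto (fun β : ℝ => Real.exp (-(mu * (u / β)))) atTop (nhds 1) := by
        have h1' : Tendsto (fun β : ℝ => -(mu * (u / β))) atTop (nhds 0) := by
          simpa using h1.neg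
        have := (Real.continuous_exp.tendsto 0).comp h1'
        simpa [Function.comp_def] using this
      have := (h2.const_mul mu).mul_const (fker u)
      simpa using this
  convert hlim using 2
  rw [integral_const_mul, fker_integral]
  ring
end
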